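/- Let d ≤ n with n ≥ 2 and let {E_i}_{i=1}^n be an equiangular POVM on ℂ^d, i.e., E_i = (d/n)Π_i where each Π_i is a rank-one orthogonal projection, tr(Π_i Π_j) = (n−d)/(d(n−1)) for all i ≠ j, and Σ_i E_i = I. Then its orthogonality satisfies O = Σ_{i,j} (tr(√E_i √E_j))² − 2d + n = (n−d)²/(n−1). -/

import Mathlib

open Matrix BigOperators
open scoped ComplexOrder

/-- The positive semidefinite square root of a positive semidefinite matrix
(the definition `Matrix.PosSemidef.sqrt` of the older Mathlib, since removed). -/
noncomputable def Matrix.PosSemidef.sqrt {n : Type*} [Fintype n] [DecidableEq n] {𝕜 : Type*}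
    [RCLike 𝕜] {A : Matrix n n 𝕜} (hA : A.PosSemidef) : Matrix n n 𝕜 :=
  hA.1.eigenvectorUnitary * diagonal ((fun x : ℝ => (x : 𝕜)) ∘ Real.sqrt ∘ hA.1.eigenvalues) *
    (star hA.1.eigenvectorUnitary : Matrix n n 𝕜)

lemma posSemidef_real_smul {m : ℕ} {M : Matrix (Fin m) (Fin m) ℂ} (hM : M.PosSemidef)
    {c : ℝ} (hc : 0 ≤ c) : ((c : ℂ) • M).PosSemidef := by
  constructor
  · unfold Matrix.IsHermitian
    rw [conjTranspose_smul, hM.1]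
    simp
  · exact (hM.smul (show (0 : ℂ) ≤ c by exact_mod_cast hc)).2

/-- For an equiangular POVM `{E_i = (d/n)Π_i}` on `ℂ^d` (with `d ≤ n`, `n ≥ 2`,
each `Π_i` a rank-one orthogonal projection, `tr(Π_i Π_j) = (n−d)/(d(n−1))` for `i ≠ j`,
and `Σ_i E_i = I`), the orthogonality satisfies
`O = Σ_{i,j} (tr(√E_i √E_j))² − 2d + n = (n−d)²/(n−1)`. -/
theorem ea_povm_orthogonality
    (d n : ℕ) (hdn : d ≤ n) (hn : 2 ≤ n)
    (P : Fin n → Matrix (Fin d) (Fin d) ℂ)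
    (hproj : ∀ i, (P i).IsHermitian ∧ P i * P i = P i ∧ (P i).trace = 1)
    (hangle : ∀ i j, i ≠ j →
      (P i * P j).trace = ((((n : ℝ) - d) / ((d : ℝ) * ((n : ℝ) - 1)) : ℝ) : ℂ))
    (E : Fin n → Matrix (Fin d) (Fin d) ℂ)
    (hEdef : ∀ i, E i = ((d : ℂ) / (n : ℂ)) • P i)
    (hE : ∀ i, (E i).PosSemidef)
    (hsum : ∑ i, E i = 1) :
    ∑ i, ∑ j, (((hE i).sqrt * (hE j).sqrt).trace.re) ^ 2 - 2 * (d : ℝ) + (n : ℝ)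
      = ((n : ℝ) - d) ^ 2 / ((n : ℝ) - 1) := by
  -- d ≥ 1
  have hd : 1 ≤ d := by
    by_contra h
    have hd0 : d = 0 := by omega
    have := (hproj ⟨0, by omega⟩).2.2
    subst hd0
    simp [Matrix.trace] at this
  have hn0 : (n : ℝ) ≠ 0 := by positivity
  have hd0 : (d : ℝ) ≠ 0 := by positivity
  have hn1 : (n : ℝ) - 1 ≠ 0 := by
    have : (2 : ℝ) ≤ n := by exact_mod_cast hn
    linarith
  set q : ℝ := (d : ℝ) / n with hq
  have hq0 : 0 ≤ q := by positivity
  -- square root of E i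
  have hPpsd : ∀ i, (P i).PosSemidef := by
    intro i
    have h1 := (hproj i).1
    have h2 := (hproj i).2.1
    have : P i = (P i)ᴴ * P i := by rw [h1, h2]
    rw [this]
    exact Matrix.posSemidef_conjTranspose_mul_self _
  have hsqrt : ∀ i, (hE i).sqrt = ((Real.sqrt q : ℂ)) • P i := by
    intro i
    have hB := posSemidef_real_smul (hPpsd i) (Real.sqrt_nonneg q)
    have hE2 : (((Real.sqrt q : ℂ)) • P i) ^ 2 = E i := by
      rw [hEdef i]
      rw [pow_two, Matrix.smul_mul, Matrix.mul_smul, smul_smul, (hproj i).2.1]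
      congr 1
      rw [← Complex.ofReal_mul, Real.mul_self_sqrt hq0, hq]
      push_cast
      ring
    calc (hE i).sqrt = cfc Real.sqrt (E i) := by
          rw [(hE i).1.cfc_eq Real.sqrt, IsHermitian.cfc, Unitary.conjStarAlgAut_apply]; rfl
      _ = ((Real.sqrt q : ℂ)) • P i := by
          rw [← hE2, ← cfc_pow_id (R := ℝ) _ 2 hB.1.isSelfAdjoint,
            ← cfc_comp Real.sqrt (fun x : ℝ => x ^ 2) _ hB.1.isSelfAdjoint]
          conv_rhs => rw [← cfc_id ℝ (((Real.sqrt q : ℂ)) • P i) hB.1.isSelfAdjoint]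
          apply cfc_congr
          intro x hx
          rw [hB.1.spectrum_real_eq_range_eigenvalues] at hx
          obtain ⟨k, rfl⟩ := hx
          simp [Real.sqrt_sq (hB.eigenvalues_nonneg k)]
  -- trace formula
  have htr : ∀ i j, (((hE i).sqrt * (hE j).sqrt).trace.re) = q * ((P i * P j).trace.re) := by
    intro i j
    rw [hsqrt i, hsqrt j, Matrix.smul_mul, Matrix.mul_smul, smul_smul, Matrix.trace_smul,
      ← Complex.ofReal_mul, Real.mul_self_sqrt hq0]
    simp [Complex.ofReal_mul]
  -- values
  set c : ℝ := ((n : ℝ) - d) / ((d : ℝ) * ((n : ℝ) - 1)) with hc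
  have hval : ∀ i j, (((hE i).sqrt * (hE j).sqrt).trace.re) ^ 2
      = if i = j then q ^ 2 else (q * c) ^ 2 := by
    intro i j
    by_cases h : i = j
    · subst h
      rw [htr, (hproj i).2.1, (hproj i).2.2]
      simp
    · rw [htr, hangle i j h]
      simp [h, Complex.ofReal_re]
  have hsum2 : ∑ i, ∑ j, (((hE i).sqrt * (hE j).sqrt).trace.re) ^ 2
      = n * q ^ 2 + (n * (n - 1)) * (q * c) ^ 2 := by
    have : ∀ i : Fin n, ∑ j, (((hE i).sqrt * (hE j).sqrt).trace.re) ^ 2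
        = q ^ 2 + ((n : ℝ) - 1) * (q * c) ^ 2 := by
      intro i
      rw [Finset.sum_congr rfl (fun j _ => hval i j)]
      rw [← Finset.add_sum_erase _ _ (Finset.mem_univ i)]
      rw [if_pos rfl]
      congr 1
      rw [Finset.sum_congr rfl (fun j hj => if_neg (Ne.symm (Finset.ne_of_mem_erase hj)))]
      rw [Finset.sum_const, Finset.card_erase_of_mem (Finset.mem_univ i), Finset.card_univ]
      simp only [Fintype.card_fin, nsmul_eq_mul]
      have h2 : (2 : ℝ) ≤ n := by exact_mod_cast hn
      rw [Nat.cast_sub (by omega)]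
      norm_num
    rw [Finset.sum_congr rfl (fun i _ => this i), Finset.sum_const]
    simp [Finset.card_univ]
    ring
  rw [hsum2, hq, hc]
  have hd2 : (d : ℝ) * ((n : ℝ) - 1) ≠ 0 := mul_ne_zero hd0 hn1
  field_simp
  ring
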